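/- Let a ∈ ℝ²₊ with |a| = 1 and suppose f is a self-dual antinorm on ℝ²₊ whose unit ball's closest point to the origin is a. Let K₁ be one of the two closed angles into which the ray through a splits ℝ²₊, and set f̃₂(y) = inf_{x ∈ K₁} (y,x)/f(x) for y in the other angle K₂. Then f(y) = f̃₂(y) for all y ∈ K₂; i.e., the restriction of f to K₂ is determined by its restriction to K₁ via the polar formula. -/

import Mathlib

/-- The nonnegative orthant in ℝ^d. -/
def orthant (d : ℕ) : Set (EuclideanSpace ℝ (Fin d)) := {x | ∀ i, 0 ≤ x i}

/-- An antinorm on ℝ^d₊: concave, positively homogeneous, nonnegative,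
and positive somewhere. -/
def IsAntinorm {d : ℕ} (f : EuclideanSpace ℝ (Fin d) → ℝ) : Prop :=
  ConcaveOn ℝ (orthant d) f ∧
  (∀ x ∈ orthant d, ∀ c : ℝ, 0 ≤ c → f (c • x) = c * f x) ∧
  (∀ x ∈ orthant d, 0 ≤ f x) ∧
  (∃ x ∈ orthant d, 0 < f x)

/-- The dual antinorm f*(y) = inf{(y,x) : x ∈ ℝ^d₊, f(x) ≥ 1}. -/
noncomputable def dualAntinorm {d : ℕ} (f : EuclideanSpace ℝ (Fin d) → ℝ)
    (y : EuclideanSpace ℝ (Fin d)) : ℝ :=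
  sInf ((fun x => (inner ℝ y x : ℝ)) '' {x | x ∈ orthant d ∧ 1 ≤ f x})

lemma inner_orthant_nonneg {d : ℕ} {x y : EuclideanSpace ℝ (Fin d)}
    (hx : x ∈ orthant d) (hy : y ∈ orthant d) : 0 ≤ (inner ℝ x y : ℝ) := by
  rw [PiLp.inner_apply]
  exact Finset.sum_nonneg fun i _ => by
    simpa using mul_nonneg (hy i) (hx i)

lemma aux_main (f : EuclideanSpace ℝ (Fin 2) → ℝ) (hf : IsAntinorm f)
    (hsd : ∀ y ∈ orthant 2, dualAntinorm f y = f y)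
    (a : EuclideanSpace ℝ (Fin 2)) (ha : a ∈ orthant 2) (hfa : f a = 1)
    (K₁ K₂ : Set (EuclideanSpace ℝ (Fin 2))) (haK1 : a ∈ K₁)
    (hK1 : K₁ ⊆ orthant 2) (hK2 : K₂ ⊆ orthant 2)
    (hcover : ∀ x ∈ orthant 2, x ∈ K₁ ∨ x ∈ K₂)
    (hkey : ∀ y ∈ K₂, ∀ x ∈ K₂, 1 ≤ (inner ℝ a x : ℝ) → (inner ℝ y a : ℝ) ≤ inner ℝ y x)
    (y : EuclideanSpace ℝ (Fin 2)) (hy : y ∈ K₂) :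
    f y = sInf ((fun x => (inner ℝ y x : ℝ) / f x) '' {x | x ∈ K₁ ∧ f x ≠ 0}) := by
  have hyo : y ∈ orthant 2 := hK2 hy
  set S : Set ℝ := (fun x => (inner ℝ y x : ℝ)) '' {x | x ∈ orthant 2 ∧ 1 ≤ f x} with hS
  set T : Set ℝ := (fun x => (inner ℝ y x : ℝ) / f x) '' {x | x ∈ K₁ ∧ f x ≠ 0} with hT
  have hfy : f y = sInf S := (hsd y hyo).symm
  have haS : (inner ℝ y a : ℝ) ∈ S := ⟨a, ⟨ha, hfa.ge⟩, rfl⟩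
  have haT : (inner ℝ y a : ℝ) ∈ T := by
    refine ⟨a, ⟨haK1, by rw [hfa]; exact one_ne_zero⟩, ?_⟩
    simp [hfa]
  have hTne : T.Nonempty := ⟨_, haT⟩
  have hSne : S.Nonempty := ⟨_, haS⟩
  have hbddS : BddBelow S := by
    refine ⟨0, fun s hs => ?_⟩
    obtain ⟨x, ⟨hxo, _⟩, rfl⟩ := hs
    exact inner_orthant_nonneg hyo hxo
  have hbddT : BddBelow T := by
    refine ⟨0, fun t ht => ?_⟩
    obtain ⟨x, ⟨hxK, _⟩, rfl⟩ := ht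
    exact div_nonneg (inner_orthant_nonneg hyo (hK1 hxK)) (hf.2.2.1 x (hK1 hxK))
  -- key: 1 ≤ ⟨a, x⟩ for all x with f x ≥ 1
  have hax : ∀ x ∈ orthant 2, 1 ≤ f x → 1 ≤ (inner ℝ a x : ℝ) := by
    intro x hxo hfx
    have h1 : dualAntinorm f a = 1 := by rw [hsd a ha, hfa]
    have hbdd : BddBelow ((fun x => (inner ℝ a x : ℝ)) '' {x | x ∈ orthant 2 ∧ 1 ≤ f x}) := by
      refine ⟨0, fun s hs => ?_⟩
      obtain ⟨z, ⟨hzo, _⟩, rfl⟩ := hs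
      exact inner_orthant_nonneg ha hzo
    calc (1:ℝ) = dualAntinorm f a := h1.symm
      _ ≤ (inner ℝ a x : ℝ) := csInf_le hbdd ⟨x, ⟨hxo, hfx⟩, rfl⟩
  rw [hfy]
  apply le_antisymm
  · -- sInf S ≤ sInf T
    apply le_csInf hTne
    rintro t ⟨x, ⟨hxK, hfx⟩, rfl⟩
    have hxo := hK1 hxK
    have hfxpos : 0 < f x := lt_of_le_of_ne (hf.2.2.1 x hxo) (Ne.symm hfx)
    set z := (f x)⁻¹ • x with hz
    have hzo : z ∈ orthant 2 := fun i => by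
      simpa [hz] using mul_nonneg (inv_nonneg.2 hfxpos.le) (hxo i)
    have hfz : f z = 1 := by
      rw [hz, hf.2.1 x hxo _ (inv_nonneg.2 hfxpos.le), inv_mul_cancel₀ hfx]
    have hiz : (inner ℝ y z : ℝ) = (inner ℝ y x : ℝ) / f x := by
      rw [hz, real_inner_smul_right]; ring
    calc sInf S ≤ (inner ℝ y z : ℝ) := csInf_le hbddS ⟨z, ⟨hzo, hfz.ge⟩, rfl⟩
      _ = _ := hiz
  · -- sInf T ≤ sInf S
    apply le_csInf hSne
    rintro s ⟨x, ⟨hxo, hfx⟩, rfl⟩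
    rcases hcover x hxo with hxK | hxK
    · have hfxpos : (0:ℝ) < f x := lt_of_lt_of_le one_pos hfx
      calc sInf T ≤ (inner ℝ y x : ℝ) / f x :=
            csInf_le hbddT ⟨x, ⟨hxK, hfxpos.ne'⟩, rfl⟩
        _ ≤ (inner ℝ y x : ℝ) := div_le_self (inner_orthant_nonneg hyo hxo) hfx
    · calc sInf T ≤ (inner ℝ y a : ℝ) := csInf_le hbddT haT
        _ ≤ (inner ℝ y x : ℝ) := hkey y hy x hxK (hax x hxo hfx)

/-- Classification in dimension 2: if f is a self-dual antinorm on ℝ²₊ whose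
unit ball's closest point to the origin is the unit vector a, and the ray
through a splits ℝ²₊ into the two closed angles K₁ and K₂, then on K₂ the
antinorm f is recovered from its restriction to K₁ by the polar formula. -/
theorem stmt_18 (f : EuclideanSpace ℝ (Fin 2) → ℝ) (hf : IsAntinorm f)
    (hsd : ∀ y ∈ orthant 2, dualAntinorm f y = f y)
    (a : EuclideanSpace ℝ (Fin 2)) (ha : a ∈ orthant 2)
    (hnorm : ‖a‖ = 1) (hfa : f a = 1)
    (hmin : ∀ x ∈ orthant 2, 1 ≤ f x → ‖a‖ ≤ ‖x‖)
    (K₁ K₂ : Set (EuclideanSpace ℝ (Fin 2)))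
    -- K₁ is one of the two closed angles into which the ray through a splits
    -- ℝ²₊, and K₂ is the other one :
    (hsplit :
      (K₁ = {x | x ∈ orthant 2 ∧ x 1 * a 0 ≤ x 0 * a 1} ∧
       K₂ = {x | x ∈ orthant 2 ∧ x 0 * a 1 ≤ x 1 * a 0}) ∨
      (K₁ = {x | x ∈ orthant 2 ∧ x 0 * a 1 ≤ x 1 * a 0} ∧
       K₂ = {x | x ∈ orthant 2 ∧ x 1 * a 0 ≤ x 0 * a 1})) :
    ∀ y ∈ K₂, f y =
      sInf ((fun x => (inner ℝ y x : ℝ) / f x) '' {x | x ∈ K₁ ∧ f x ≠ 0}) := by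
  have hna : a 0 ^ 2 + a 1 ^ 2 = 1 := by
    have h := real_inner_self_eq_norm_sq a
    rw [hnorm] at h
    simp only [PiLp.inner_apply, Fin.sum_univ_two, RCLike.inner_apply, conj_trivial] at h
    nlinarith [h]
  intro y hy
  rcases hsplit with ⟨h1, h2⟩ | ⟨h1, h2⟩ <;> subst h1 <;> subst h2 <;>
    refine aux_main f hf hsd a ha hfa _ _ ?_
      (fun x hx => hx.1) (fun x hx => hx.1) (fun x hxo => ?_)
      (fun y' hy' x hx hax => ?_) y hy
  · exact ⟨ha, le_of_eq (mul_comm _ _)⟩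
  · rcases le_total (x 1 * a 0) (x 0 * a 1) with h | h
    · exact Or.inl ⟨hxo, h⟩
    · exact Or.inr ⟨hxo, h⟩
  · obtain ⟨hy'o, hy'2⟩ := hy'
    obtain ⟨hxo, hx2⟩ := hx
    simp only [PiLp.inner_apply, Fin.sum_univ_two, RCLike.inner_apply,
      conj_trivial] at hax ⊢
    nlinarith [mul_nonneg (sub_nonneg.2 hx2) (sub_nonneg.2 hy'2),
      mul_nonneg (hy'o 0) (ha 0), mul_nonneg (hy'o 1) (ha 1),
      mul_nonneg (sub_nonneg.2 hax) (add_nonneg (mul_nonneg (hy'o 0) (ha 0)) (mul_nonneg (hy'o 1) (ha 1)))]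
  · exact ⟨ha, le_of_eq (mul_comm _ _)⟩
  · rcases le_total (x 1 * a 0) (x 0 * a 1) with h | h
    · exact Or.inr ⟨hxo, h⟩
    · exact Or.inl ⟨hxo, h⟩
  · obtain ⟨hy'o, hy'2⟩ := hy'
    obtain ⟨hxo, hx2⟩ := hx
    simp only [PiLp.inner_apply, Fin.sum_univ_two, RCLike.inner_apply,
      conj_trivial] at hax ⊢
    nlinarith [mul_nonneg (sub_nonneg.2 hx2) (sub_nonneg.2 hy'2),
      mul_nonneg (hy'o 0) (ha 0), mul_nonneg (hy'o 1) (ha 1),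
      mul_nonneg (sub_nonneg.2 hax) (add_nonneg (mul_nonneg (hy'o 0) (ha 0)) (mul_nonneg (hy'o 1) (ha 1)))]
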